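/- Let 0<α₁<α₂ and take parameters (α₀,α₁,α₂,α₃)=(α₁,α₁,α₂,α₂). For every point (x,y)∈ℝ⁴×ℝ⁴ with C₁(x)=0 and C₂(x,y)=0, the Dirac brackets {H,J₁}, {H,J₂} and {J₁,J₂} all vanish at (x,y), where H=½(y₀²+y₁²+y₂²+y₃²), J₁=x₀y₁−x₁y₀ and J₂=x₂y₃−x₃y₂. -/

import Mathlib

noncomputable section

/-- Points of `T*ℝⁿ = ℝⁿ × ℝⁿ`, written `(x, y)`. -/
abbrev Pt (n : ℕ) := (Fin n → ℝ) × (Fin n → ℝ)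

/-- `D(x) = Σᵢ xᵢ²/αᵢ²`. -/
def Dq {n : ℕ} (α : Fin n → ℝ) (x : Fin n → ℝ) : ℝ := ∑ i, (x i)^2 / (α i)^2

/-- Partial derivative of `f` in the direction `xᵢ`. -/
def pdx {n : ℕ} (f : Pt n → ℝ) (p : Pt n) (i : Fin n) : ℝ :=
  fderiv ℝ f p (Pi.single i 1, 0)

/-- Partial derivative of `f` in the direction `yᵢ`. -/
def pdy {n : ℕ} (f : Pt n → ℝ) (p : Pt n) (i : Fin n) : ℝ :=
  fderiv ℝ f p (0, Pi.single i 1)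

/-- The Dirac bracket on `T*ℝⁿ` for the ellipsoid with semi-axes `√(αᵢ)`:
`{f,g} = Σᵢₖ (∂f/∂xᵢ ∂g/∂yₖ − ∂g/∂xᵢ ∂f/∂yₖ)(δᵢₖ − xᵢxₖ/(D αᵢ αₖ))
        − Σᵢₖ (∂f/∂yᵢ)(∂g/∂yₖ)(xᵢyₖ − xₖyᵢ)/(D αᵢ αₖ)`. -/
def dirac {n : ℕ} (α : Fin n → ℝ) (f g : Pt n → ℝ) (p : Pt n) : ℝ :=
  (∑ i, ∑ k,
    (pdx f p i * pdy g p k - pdx g p i * pdy f p k) *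
      ((if i = k then (1:ℝ) else 0) - p.1 i * p.1 k / (Dq α p.1 * α i * α k)))
  - ∑ i, ∑ k,
      pdy f p i * pdy g p k * (p.1 i * p.2 k - p.1 k * p.2 i) / (Dq α p.1 * α i * α k)

/-- The constraint `C₁(x) = Σᵢ xᵢ²/αᵢ − 1`. -/
def C1 {n : ℕ} (α : Fin n → ℝ) (x : Fin n → ℝ) : ℝ := (∑ i, (x i)^2 / α i) - 1

/-- The constraint `C₂(x,y) = Σᵢ xᵢyᵢ/αᵢ`. -/
def C2 {n : ℕ} (α : Fin n → ℝ) (p : Pt n) : ℝ := ∑ i, p.1 i * p.2 i / α i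

/-- The Hamiltonian `H = ½(y₀² + y₁² + y₂² + y₃²)`. -/
def H4 (p : Pt 4) : ℝ := (1/2) * ((p.2 0)^2 + (p.2 1)^2 + (p.2 2)^2 + (p.2 3)^2)

/-- The angular momentum `J₁ = x₀y₁ − x₁y₀`. -/
def Jmom1 (p : Pt 4) : ℝ := p.1 0 * p.2 1 - p.1 1 * p.2 0

/-- The angular momentum `J₂ = x₂y₃ − x₃y₂`. -/
def Jmom2 (p : Pt 4) : ℝ := p.1 2 * p.2 3 - p.1 3 * p.2 2

set_option maxHeartbeats 1000000
def Lx (i : Fin 4) : Pt 4 →L[ℝ] ℝ :=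
  (ContinuousLinearMap.proj i).comp (ContinuousLinearMap.fst ℝ (Fin 4 → ℝ) (Fin 4 → ℝ))
def Ly (i : Fin 4) : Pt 4 →L[ℝ] ℝ :=
  (ContinuousLinearMap.proj i).comp (ContinuousLinearMap.snd ℝ (Fin 4 → ℝ) (Fin 4 → ℝ))
lemma hLx (i : Fin 4) (p : Pt 4) : HasFDerivAt (fun q : Pt 4 => q.1 i) (Lx i) p :=
  (Lx i).hasFDerivAt
lemma hLy (i : Fin 4) (p : Pt 4) : HasFDerivAt (fun q : Pt 4 => q.2 i) (Ly i) p :=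
  (Ly i).hasFDerivAt

lemma fderiv_H4' (p : Pt 4) :
    HasFDerivAt H4 (p.2 0 • Ly 0 + p.2 1 • Ly 1 + p.2 2 • Ly 2 + p.2 3 • Ly 3) p := by
  have h : ∀ i : Fin 4, HasFDerivAt (fun q : Pt 4 => (q.2 i)^2) (((2:ℝ) * p.2 i) • Ly i) p := by
    intro i
    have := (hLy i p).mul (hLy i p)
    have e : (fun q : Pt 4 => (q.2 i)^2) = fun q : Pt 4 => q.2 i * q.2 i := by
      funext q; ring
    rw [e]
    refine this.congr_fderiv ?_
    ext v <;> simp [Ly] <;> ring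
  have := (((((h 0).add (h 1)).add (h 2)).add (h 3)).const_mul (1/2 : ℝ))
  have e : H4 = fun q : Pt 4 => (1/2 : ℝ) * ((q.2 0)^2 + (q.2 1)^2 + (q.2 2)^2 + (q.2 3)^2) := rfl
  rw [e]
  refine this.congr_fderiv ?_
  ext v <;> simp [Ly] <;> ring

lemma fderiv_J1 (p : Pt 4) :
    HasFDerivAt Jmom1 (p.1 0 • Ly 1 + p.2 1 • Lx 0 - (p.1 1 • Ly 0 + p.2 0 • Lx 1)) p :=
  ((hLx 0 p).mul (hLy 1 p)).sub ((hLx 1 p).mul (hLy 0 p))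

lemma fderiv_J2 (p : Pt 4) :
    HasFDerivAt Jmom2 (p.1 2 • Ly 3 + p.2 3 • Lx 2 - (p.1 3 • Ly 2 + p.2 2 • Lx 3)) p :=
  ((hLx 2 p).mul (hLy 3 p)).sub ((hLx 3 p).mul (hLy 2 p))

lemma pdx_H4 (p : Pt 4) (i : Fin 4) : pdx H4 p i = 0 := by
  simp [pdx, (fderiv_H4' p).fderiv, Lx, Ly]

lemma pdy_H4 (p : Pt 4) (i : Fin 4) : pdy H4 p i = p.2 i := by
  simp [pdy, (fderiv_H4' p).fderiv, Lx, Ly, Pi.single_apply]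
  fin_cases i <;> simp

lemma pdx_J1 (p : Pt 4) (i : Fin 4) :
    pdx Jmom1 p i = (if i = 0 then p.2 1 else 0) - (if i = 1 then p.2 0 else 0) := by
  simp [pdx, (fderiv_J1 p).fderiv, Lx, Ly, Pi.single_apply]
  fin_cases i <;> simp

lemma pdy_J1 (p : Pt 4) (i : Fin 4) :
    pdy Jmom1 p i = (if i = 1 then p.1 0 else 0) - (if i = 0 then p.1 1 else 0) := by
  simp [pdy, (fderiv_J1 p).fderiv, Lx, Ly, Pi.single_apply]
  fin_cases i <;> simp

lemma pdx_J2 (p : Pt 4) (i : Fin 4) :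
    pdx Jmom2 p i = (if i = 2 then p.2 3 else 0) - (if i = 3 then p.2 2 else 0) := by
  simp [pdx, (fderiv_J2 p).fderiv, Lx, Ly, Pi.single_apply]
  fin_cases i <;> simp

lemma pdy_J2 (p : Pt 4) (i : Fin 4) :
    pdy Jmom2 p i = (if i = 3 then p.1 2 else 0) - (if i = 2 then p.1 3 else 0) := by
  simp [pdy, (fderiv_J2 p).fderiv, Lx, Ly, Pi.single_apply]
  fin_cases i <;> simp

/-- On the constraint set `C₁ = C₂ = 0` of the ellipsoid with parameters
`(α₁,α₁,α₂,α₂)`, the Dirac brackets `{H,J₁}`, `{H,J₂}`, `{J₁,J₂}` all vanish. -/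
theorem stmt0 (α₁ α₂ : ℝ) (hα₁ : 0 < α₁) (hα₁₂ : α₁ < α₂) (p : Pt 4)
    (hC1 : C1 ![α₁, α₁, α₂, α₂] p.1 = 0)
    (hC2 : C2 ![α₁, α₁, α₂, α₂] p = 0) :
    dirac ![α₁, α₁, α₂, α₂] H4 Jmom1 p = 0 ∧
    dirac ![α₁, α₁, α₂, α₂] H4 Jmom2 p = 0 ∧
    dirac ![α₁, α₁, α₂, α₂] Jmom1 Jmom2 p = 0 := by
  have hb : (0:ℝ) < α₂ := hα₁.trans hα₁₂
  have ha' : α₁ ≠ 0 := ne_of_gt hα₁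
  have hb' : α₂ ≠ 0 := ne_of_gt hb
  simp only [C1, Fin.sum_univ_four, Matrix.cons_val_zero, Matrix.cons_val_one,
    Matrix.head_cons, Matrix.cons_val_two, Matrix.tail_cons, Matrix.cons_val_three,
    sub_eq_zero] at hC1
  have hC1' : ((p.1 0)^2 + (p.1 1)^2) * α₂ + ((p.1 2)^2 + (p.1 3)^2) * α₁ = α₁ * α₂ := by
    field_simp at hC1
    apply mul_right_cancel₀ hb'
    linear_combination α₂ * hC1
  have hDpos : 0 < Dq ![α₁, α₁, α₂, α₂] p.1 := by
    have hnum : 0 < ((p.1 0)^2 + (p.1 1)^2) * α₂^2 + ((p.1 2)^2 + (p.1 3)^2) * α₁^2 := by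
      nlinarith [sq_nonneg (p.1 0), sq_nonneg (p.1 1), sq_nonneg (p.1 2), sq_nonneg (p.1 3),
        mul_pos (mul_pos hα₁ hα₁) hb,
        mul_nonneg (add_nonneg (sq_nonneg (p.1 0)) (sq_nonneg (p.1 1)))
          (mul_nonneg (sub_nonneg.2 hα₁₂.le) hb.le)]
    have hEq : Dq ![α₁, α₁, α₂, α₂] p.1
        = (((p.1 0)^2 + (p.1 1)^2) * α₂^2 + ((p.1 2)^2 + (p.1 3)^2) * α₁^2) / (α₁^2 * α₂^2) := by
      simp only [Dq, Fin.sum_univ_four, Matrix.cons_val_zero, Matrix.cons_val_one,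
        Matrix.head_cons, Matrix.cons_val_two, Matrix.tail_cons, Matrix.cons_val_three]
      field_simp
      ring
    rw [hEq]
    positivity
  have hD' : Dq ![α₁, α₁, α₂, α₂] p.1 ≠ 0 := ne_of_gt hDpos
  refine ⟨?_, ?_, ?_⟩ <;>
  · simp only [dirac, Fin.sum_univ_four, pdx_H4, pdy_H4, pdx_J1, pdy_J1, pdx_J2, pdy_J2,
      Fin.reduceEq, reduceIte, Matrix.cons_val_zero, Matrix.cons_val_one, Matrix.head_cons,
      Matrix.cons_val_two, Matrix.tail_cons, Matrix.cons_val_three, if_true, if_false,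
      mul_zero, zero_mul, sub_zero, zero_sub, add_zero, zero_add, mul_one, one_mul, neg_zero]
    field_simp
    ring
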